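/- For every positive integer n, the group ℤ admits a finite generating set A such that the dead-end depth of ℤ with respect to A is at least n. -/

import Mathlib

/-- Word length of `g` with respect to generating set `S` (using `S ∪ S⁻¹`). -/
noncomputable def wl {G : Type*} [Group G] (S : Set G) (g : G) : ℕ :=
  sInf {n | ∃ l : List G, (∀ x ∈ l, x ∈ S ∨ x⁻¹ ∈ S) ∧ l.length = n ∧ l.prod = g}

/-- Word metric with respect to `S`. -/
noncomputable def wdist {G : Type*} [Group G] (S : Set G) (g h : G) : ℕ := wl S (g⁻¹ * h)

/-- Dead-end depth of `g` with respect to `A`: distance to the nearest element strictly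
farther from the identity, `⊤` if none exists. -/
noncomputable def depth {G : Type*} [Group G] (A : Set G) (g : G) : ℕ∞ :=
  sInf ((fun g' => (wdist A g g' : ℕ∞)) '' {g' | wl A g < wl A g'})

/-- Partial product `u 0 * u 1 * ⋯ * u (i-1)`. -/
def pprod {M : Type*} [Monoid M] (u : ℕ → M) (i : ℕ) : M := ((List.range i).map u).prod

open Multiplicative

def genA (K : ℕ) : Set (Multiplicative ℤ) := {ofAdd (K:ℤ), ofAdd ((K:ℤ)+1)}

lemma mem_decode {K : ℕ} {x : Multiplicative ℤ} (hx : x ∈ genA K ∨ x⁻¹ ∈ genA K) :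
    x.toAdd = (K:ℤ) ∨ x.toAdd = (K:ℤ)+1 ∨ x.toAdd = -(K:ℤ) ∨ x.toAdd = -((K:ℤ)+1) := by
  rcases hx with h | h <;> simp only [genA, Set.mem_insert_iff, Set.mem_singleton_iff] at h <;>
    rcases h with h | h
  · left; rw [h]; simp
  · right; left; rw [h]; simp
  · right; right; left
    have : x = (ofAdd (K:ℤ))⁻¹ := by rw [← h]; simp
    rw [this]; simp
  · right; right; right
    have : x = (ofAdd ((K:ℤ)+1))⁻¹ := by rw [← h]; simp
    rw [this]; simp

lemma extract {K : ℕ} (l : List (Multiplicative ℤ))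
    (hl : ∀ x ∈ l, x ∈ genA K ∨ x⁻¹ ∈ genA K) :
    ∃ a b : ℤ, l.prod.toAdd = a*(K:ℤ) + b*((K:ℤ)+1) ∧ |a| + |b| ≤ (l.length : ℤ) := by
  induction l with
  | nil => exact ⟨0, 0, by simp, by simp⟩
  | cons x l ih =>
    obtain ⟨a, b, h1, h2⟩ := ih (fun y hy => hl y (List.mem_cons_of_mem _ hy))
    have hx := mem_decode (hl x (List.mem_cons_self))
    have hprod : (x :: l).prod.toAdd = x.toAdd + l.prod.toAdd := by simp
    have hlen : ((x :: l).length : ℤ) = (l.length : ℤ) + 1 := by push_cast [List.length_cons]; ring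
    rcases hx with h | h | h | h
    · refine ⟨a+1, b, by rw [hprod, h, h1]; ring, ?_⟩
      have : |a+1| ≤ |a| + 1 := by simpa using abs_add_le a 1
      rw [hlen]; linarith
    · refine ⟨a, b+1, by rw [hprod, h, h1]; ring, ?_⟩
      have : |b+1| ≤ |b| + 1 := by simpa using abs_add_le b 1
      rw [hlen]; linarith
    · refine ⟨a-1, b, by rw [hprod, h, h1]; ring, ?_⟩
      have : |a-1| ≤ |a| + 1 := by simpa using abs_sub a 1
      rw [hlen]; linarith
    · refine ⟨a, b-1, by rw [hprod, h, h1]; ring, ?_⟩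
      have : |b-1| ≤ |b| + 1 := by simpa using abs_sub b 1
      rw [hlen]; linarith

lemma builder (K : ℕ) (p q p' q' : ℕ) :
    ∃ l : List (Multiplicative ℤ), (∀ x ∈ l, x ∈ genA K ∨ x⁻¹ ∈ genA K) ∧
      l.length = p + q + p' + q' ∧
      l.prod = ofAdd ((p:ℤ)*(K:ℤ) + (q:ℤ)*((K:ℤ)+1) - (p':ℤ)*(K:ℤ) - (q':ℤ)*((K:ℤ)+1)) := by
  refine ⟨List.replicate p (ofAdd (K:ℤ)) ++ List.replicate q (ofAdd ((K:ℤ)+1)) ++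
      List.replicate p' (ofAdd (-(K:ℤ))) ++ List.replicate q' (ofAdd (-((K:ℤ)+1))), ?_, by simp; ring, ?_⟩
  · intro x hx
    simp only [List.mem_append, List.mem_replicate] at hx
    rcases hx with ((⟨-, rfl⟩ | ⟨-, rfl⟩) | ⟨-, rfl⟩) | ⟨-, rfl⟩
    · left; exact Set.mem_insert _ _
    · left; exact Set.mem_insert_of_mem _ rfl
    · right; simp only [genA]; left; simp
    · right; simp only [genA]; right; simp
  · simp only [List.prod_append, List.prod_replicate]
    have hp : ∀ (c : ℕ) (v : ℤ), (ofAdd v) ^ c = ofAdd ((c:ℤ) * v) := by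
      intro c v
      apply Multiplicative.toAdd.injective
      simp [toAdd_pow, mul_comm]
    rw [hp, hp, hp, hp, ← ofAdd_add, ← ofAdd_add, ← ofAdd_add]
    congr 1
    ring

lemma wl_le (K : ℕ) {m : ℤ} (p q p' q' : ℕ)
    (h : (p:ℤ)*(K:ℤ) + (q:ℤ)*((K:ℤ)+1) - (p':ℤ)*(K:ℤ) - (q':ℤ)*((K:ℤ)+1) = m) :
    wl (genA K) (ofAdd m) ≤ p + q + p' + q' := by
  obtain ⟨l, h1, h2, h3⟩ := builder K p q p' q'
  exact Nat.sInf_le ⟨l, h1, h2, by rw [h3, h]⟩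

lemma wl_set_nonempty (K : ℕ) (m : ℤ) :
    {t | ∃ l : List (Multiplicative ℤ), (∀ x ∈ l, x ∈ genA K ∨ x⁻¹ ∈ genA K) ∧
      l.length = t ∧ l.prod = ofAdd m}.Nonempty := by
  rcases le_or_gt 0 m with hm | hm
  · obtain ⟨l, h1, h2, h3⟩ := builder K 0 m.toNat m.toNat 0
    refine ⟨_, l, h1, h2, ?_⟩
    rw [h3]; congr 1
    rw [Int.toNat_of_nonneg hm]; ring
  · obtain ⟨l, h1, h2, h3⟩ := builder K (-m).toNat 0 0 (-m).toNat
    refine ⟨_, l, h1, h2, ?_⟩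
    rw [h3]; congr 1
    rw [Int.toNat_of_nonneg (by omega : (0:ℤ) ≤ -m)]; ring

lemma master (K : ℕ) (m : ℤ) :
    ∃ a b : ℤ, a*(K:ℤ) + b*((K:ℤ)+1) = m ∧ |a| + |b| ≤ (wl (genA K) (ofAdd m) : ℤ) := by
  have hmem := Nat.sInf_mem (wl_set_nonempty K m)
  obtain ⟨l, h1, h2, h3⟩ := hmem
  obtain ⟨a, b, e1, e2⟩ := extract l h1
  refine ⟨a, b, ?_, ?_⟩
  · rw [← e1, h3]; simp
  · rw [wl]; rw [h2] at e2; exact e2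

lemma upper_pos (K : ℕ) (hK : 0 < K) (m : ℤ) (hm0 : 0 ≤ m) (hm : m ≤ (K:ℤ)*((K:ℤ)+1)) :
    ∃ p q p' q' : ℕ,
      (p:ℤ)*(K:ℤ) + (q:ℤ)*((K:ℤ)+1) - (p':ℤ)*(K:ℤ) - (q':ℤ)*((K:ℤ)+1) = m ∧
      p + q + p' + q' ≤ K := by
  set Ki : ℤ := (K : ℤ) with hKi
  have hKpos : (0:ℤ) < Ki := by rw [hKi]; exact_mod_cast hK
  set q0 : ℤ := m / Ki with hq0
  set r : ℤ := m % Ki with hr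
  have hdiv : Ki * q0 + r = m := Int.mul_ediv_add_emod m Ki
  have hr0 : 0 ≤ r := Int.emod_nonneg m (by omega)
  have hrK : r < Ki := Int.emod_lt_of_pos m hKpos
  have hq0nn : 0 ≤ q0 := Int.ediv_nonneg hm0 (le_of_lt hKpos)
  have hq0le : q0 ≤ Ki + 1 := by
    by_contra hc
    push_neg at hc
    have h2 : Ki + 2 ≤ q0 := by omega
    have : Ki * (Ki + 2) ≤ Ki * q0 := by
      exact mul_le_mul_of_nonneg_left h2 (le_of_lt hKpos)
    nlinarith
  rcases le_or_gt r q0 with hcase | hcase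
  · rcases le_or_gt q0 Ki with hq | hq
    · -- q0 ≤ K : use (q0 - r) copies of K, r copies of K+1
      refine ⟨(q0 - r).toNat, r.toNat, 0, 0, ?_, ?_⟩
      · push_cast [Int.toNat_of_nonneg (by omega : (0:ℤ) ≤ q0 - r),
          Int.toNat_of_nonneg hr0]
        linear_combination hdiv
      · have : ((q0 - r).toNat + r.toNat + 0 + 0 : ℤ) ≤ Ki := by
          push_cast [Int.toNat_of_nonneg (by omega : (0:ℤ) ≤ q0 - r),
            Int.toNat_of_nonneg hr0]
          omega
        rw [hKi] at this; exact_mod_cast this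
    · -- q0 = K+1, forces r = 0, m = K(K+1): K copies of K+1
      have hq1 : q0 = Ki + 1 := by omega
      have hrz : r = 0 := by nlinarith
      refine ⟨0, K, 0, 0, ?_, by omega⟩
      push_cast
      rw [hq1, hrz] at hdiv
      linear_combination hdiv
  · rcases le_or_gt (2*r - q0) Ki with h2 | h2
    · -- r copies of K+1, (r - q0) copies of -K
      refine ⟨0, r.toNat, (r - q0).toNat, 0, ?_, ?_⟩
      · push_cast [Int.toNat_of_nonneg hr0,
          Int.toNat_of_nonneg (by omega : (0:ℤ) ≤ r - q0)]
        linear_combination hdiv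
      · have : ((0:ℤ) + r.toNat + (r - q0).toNat + 0) ≤ Ki := by
          push_cast [Int.toNat_of_nonneg hr0,
            Int.toNat_of_nonneg (by omega : (0:ℤ) ≤ r - q0)]
          omega
        rw [hKi] at this; exact_mod_cast this
    · -- (q0 + 1 + K - r) copies of K, (K - r) copies of -(K+1)
      refine ⟨(q0 + 1 + Ki - r).toNat, 0, 0, (Ki - r).toNat, ?_, ?_⟩
      · push_cast [Int.toNat_of_nonneg (by omega : (0:ℤ) ≤ q0 + 1 + Ki - r),
          Int.toNat_of_nonneg (by omega : (0:ℤ) ≤ Ki - r)]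
        linear_combination hdiv
      · have : ((q0 + 1 + Ki - r).toNat + (0:ℤ) + 0 + (Ki - r).toNat) ≤ Ki := by
          push_cast [Int.toNat_of_nonneg (by omega : (0:ℤ) ≤ q0 + 1 + Ki - r),
            Int.toNat_of_nonneg (by omega : (0:ℤ) ≤ Ki - r)]
          omega
        rw [hKi] at this; exact_mod_cast this

lemma upper (K : ℕ) (hK : 0 < K) (m : ℤ) (hm : |m| ≤ (K:ℤ)*((K:ℤ)+1)) :
    wl (genA K) (ofAdd m) ≤ K := by
  rcases le_or_gt 0 m with h0 | h0
  · obtain ⟨p, q, p', q', he, hle⟩ :=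
      upper_pos K hK m h0 (by rwa [abs_of_nonneg h0] at hm)
    exact (wl_le K p q p' q' he).trans hle
  · obtain ⟨p, q, p', q', he, hle⟩ :=
      upper_pos K hK (-m) (by omega) (by rwa [abs_of_neg h0] at hm)
    have he' : (p':ℤ)*(K:ℤ) + (q':ℤ)*((K:ℤ)+1) - (p:ℤ)*(K:ℤ) - (q:ℤ)*((K:ℤ)+1) = m := by
      linarith
    exact (wl_le K p' q' p q he').trans (by omega)

/-- For every positive integer `n`, the group `ℤ` admits a finite generating set with
respect to which its dead-end depth is at least `n`. -/
theorem stmt15 (n : ℕ) (hn : 0 < n) :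
    ∃ A : Set (Multiplicative ℤ), A.Finite ∧ Subgroup.closure A = ⊤ ∧
      (n : ℕ∞) ≤ ⨆ g : Multiplicative ℤ, depth A g := by
  set K : ℕ := 2 * n with hKdef
  have hK : 0 < K := by omega
  have hni : (1:ℤ) ≤ (n:ℤ) := by exact_mod_cast hn
  have hKc : ((K:ℤ)) = 2 * (n:ℤ) := by push_cast [hKdef]; ring
  refine ⟨genA K, ?_, ?_, ?_⟩
  · exact (Set.finite_singleton _).insert _
  · -- generation
    rw [eq_top_iff]
    intro g _
    have h1 : ofAdd (1:ℤ) ∈ Subgroup.closure (genA K) := by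
      have hx : ofAdd ((K:ℤ)) ∈ Subgroup.closure (genA K) :=
        Subgroup.subset_closure (Set.mem_insert _ _)
      have hy : ofAdd ((K:ℤ)+1) ∈ Subgroup.closure (genA K) :=
        Subgroup.subset_closure (Set.mem_insert_of_mem _ rfl)
      have := mul_mem hy (inv_mem hx)
      have he : ofAdd ((K:ℤ)+1) * (ofAdd ((K:ℤ)))⁻¹ = ofAdd (1:ℤ) := by
        apply Multiplicative.toAdd.injective
        simp
      rwa [he] at this
    have : g = (ofAdd (1:ℤ)) ^ (g.toAdd) := by
      apply Multiplicative.toAdd.injective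
      simp
    rw [this]
    exact zpow_mem h1 _
  · -- depth bound
    set g : Multiplicative ℤ := ofAdd ((n:ℕ):ℤ) with hg
    have hKn : ((n:ℕ):ℤ) ≤ (K:ℤ) := by rw [hKc]; linarith
    -- lower bound : wl g ≥ 2n = K
    have hwlg : (K:ℤ) ≤ (wl (genA K) g : ℤ) := by
      obtain ⟨a, b, he, hb⟩ := master K ((n:ℕ):ℤ)
      rw [← hg] at hb
      rw [hKc] at he ⊢
      set s : ℤ := a + b with hs
      have hbv : b = (n:ℤ) - 2*(n:ℤ)*s := by linear_combination he
      have hav : a = s - (n:ℤ) + 2*(n:ℤ)*s := by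
        rw [hs] at hbv ⊢; linarith
      have h1 := neg_abs_le a
      have h2 := le_abs_self a
      have h3 := neg_abs_le b
      have h4 := le_abs_self b
      rcases lt_trichotomy s 0 with hsn | hsz | hsp
      · -- s ≤ -1 : b ≥ 3n
        have hmul : 2*(n:ℤ)*s ≤ 2*(n:ℤ)*(-1) :=
          mul_le_mul_of_nonneg_left (by omega) (by positivity)
        have hb3 : 3 * (n:ℤ) ≤ b := by linarith
        linarith [abs_nonneg a]
      · -- s = 0 : b = n, a = -n
        have hbn : b = (n:ℤ) := by rw [hbv, hsz]; ring
        have han : a = -(n:ℤ) := by rw [hav, hsz]; ring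
        linarith
      · rcases eq_or_lt_of_le (by omega : (1:ℤ) ≤ s) with hs1 | hs2
        · -- s = 1 : b = -n, a = n+1
          have hbn : b = -(n:ℤ) := by rw [hbv, ← hs1]; ring
          have han : a = (n:ℤ) + 1 := by rw [hav, ← hs1]; ring
          linarith
        · -- s ≥ 2 : -b ≥ 3n
          have hmul : 2*(n:ℤ)*2 ≤ 2*(n:ℤ)*s :=
            mul_le_mul_of_nonneg_left (by omega) (by positivity)
          have hb3 : 3 * (n:ℤ) ≤ -b := by linarith
          linarith [abs_nonneg a]
    have key : ∀ x ∈ ((fun g' => ((wdist (genA K) g g' : ℕ) : ℕ∞)) ''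
        {g' | wl (genA K) g < wl (genA K) g'}), (n : ℕ∞) ≤ x := by
      rintro x ⟨h, hh, rfl⟩
      simp only [Set.mem_setOf_eq] at hh
      show (n : ℕ∞) ≤ ((wdist (genA K) g h : ℕ) : ℕ∞)
      -- wl h ≥ K + 1
      have hwlh : (K:ℤ) + 1 ≤ (wl (genA K) h : ℤ) := by
        have h' : K < wl (genA K) h := by
          have : (K:ℤ) < (wl (genA K) h : ℤ) := lt_of_le_of_lt hwlg (by exact_mod_cast hh)
          exact_mod_cast this
        omega
      -- hence |toAdd h| > K(K+1)
      have hbig : (K:ℤ)*((K:ℤ)+1) < |h.toAdd| := by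
        by_contra hc
        push_neg at hc
        have := upper K hK h.toAdd hc
        rw [ofAdd_toAdd] at this
        omega
      -- wdist bound
      have hwd : (n:ℤ) ≤ (wdist (genA K) g h : ℤ) := by
        have hd : wdist (genA K) g h = wl (genA K) (ofAdd (h.toAdd - ((n:ℕ):ℤ))) := by
          rw [wdist]
          congr 1
          apply Multiplicative.toAdd.injective
          simp [hg]
          ring
        obtain ⟨a, b, he, hb⟩ := master K (h.toAdd - ((n:ℕ):ℤ))
        rw [← hd] at hb
        -- |h.toAdd - n| ≥ K^2 + 1
        have hdist : (K:ℤ)*(K:ℤ) + 1 ≤ |h.toAdd - ((n:ℕ):ℤ)| := by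
          rcases abs_cases h.toAdd with ⟨e1, e2⟩ | ⟨e1, e2⟩ <;> rw [e1] at hbig <;>
            rcases abs_cases (h.toAdd - ((n:ℕ):ℤ)) with ⟨e3, e4⟩ | ⟨e3, e4⟩ <;>
              rw [e3] <;> nlinarith [hKn, hni]
        -- |aK + b(K+1)| ≤ (|a|+|b|)(K+1)
        have habs : |a*(K:ℤ) + b*((K:ℤ)+1)| ≤ (|a| + |b|) * ((K:ℤ)+1) := by
          have t1 : |a*(K:ℤ) + b*((K:ℤ)+1)| ≤ |a*(K:ℤ)| + |b*((K:ℤ)+1)| := abs_add_le _ _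
          have t2 : |a*(K:ℤ)| = |a| * (K:ℤ) := by
            rw [abs_mul, abs_of_nonneg (by positivity : (0:ℤ) ≤ (K:ℤ))]
          have t3 : |b*((K:ℤ)+1)| = |b| * ((K:ℤ)+1) := by
            rw [abs_mul, abs_of_nonneg (by positivity : (0:ℤ) ≤ (K:ℤ)+1)]
          have t4 : |a| * (K:ℤ) ≤ |a| * ((K:ℤ)+1) :=
            mul_le_mul_of_nonneg_left (by linarith) (abs_nonneg a)
          have t5 : (|a| + |b|) * ((K:ℤ)+1) = |a| * ((K:ℤ)+1) + |b| * ((K:ℤ)+1) := by ring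
          linarith
        rw [he] at habs
        -- conclude |a|+|b| ≥ K ≥ n
        have hup : (K:ℤ) ≤ |a| + |b| := by
          by_contra hcc
          push_neg at hcc
          have hS : |a| + |b| ≤ (K:ℤ) - 1 := by linarith
          have : (|a| + |b|) * ((K:ℤ)+1) ≤ ((K:ℤ) - 1) * ((K:ℤ)+1) :=
            mul_le_mul_of_nonneg_right hS (by positivity)
          have hexp : ((K:ℤ) - 1) * ((K:ℤ)+1) = (K:ℤ) * (K:ℤ) - 1 := by ring
          linarith
        linarith
      have h'' : (n:ℕ) ≤ wdist (genA K) g h := by exact_mod_cast hwd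
      exact_mod_cast h''
    have hdg : (n : ℕ∞) ≤ depth (genA K) g := by
      rw [depth]
      exact le_sInf key
    exact hdg.trans (le_iSup (fun g' => depth (genA K) g') g)
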